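/- For every v ∈ 𝕂^{r+1} with A·v = 0, the polynomial g_v lies in the ideal ⟨g_1,…,g_{r−c}⟩ of 𝕂[T_{ij},S_k]. Moreover, if B is a subset of the kernel of A that spans the kernel of A as a 𝕂-vector space, then the polynomials g_v, v ∈ B, generate the ideal ⟨g_1,…,g_{r−c}⟩. -/

import Mathlib

open MvPolynomial

noncomputable section

/-- Index type for the variables `T i j` (`Sum.inl ⟨i, j⟩`) and `S k` (`Sum.inr k`). -/
abbrev VarIdx (r m : ℕ) (nn : Fin (r + 1) → ℕ) : Type :=
  (Σ i : Fin (r + 1), Fin (nn i)) ⊕ Fin m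

variable (𝕂 : Type) [Field 𝕂]

/-- The monomial `T_i^{l_i} = ∏_j T_{ij}^{l_{ij}}`. -/
def Tmon (r m : ℕ) (nn : Fin (r + 1) → ℕ)
    (l : ∀ i : Fin (r + 1), Fin (nn i) → ℕ) (i : Fin (r + 1)) :
    MvPolynomial (VarIdx r m nn) 𝕂 :=
  ∏ j : Fin (nn i), (X (Sum.inl ⟨i, j⟩) : MvPolynomial (VarIdx r m nn) 𝕂) ^ l i j

/-- The map sending a column index of the `(c+2)×(c+2)` matrix defining `g_t`
to the corresponding column index of `A`, namely `0, …, c, c + (t+1)`. -/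
def colOf (r c : ℕ) (hcr : c ≤ r) (t : Fin (r - c)) (p : Fin (c + 2)) : Fin (r + 1) :=
  if h : (p : ℕ) ≤ c then ⟨p, by omega⟩
  else ⟨c + 1 + t, by have := t.isLt; omega⟩

/-- The polynomial `g_t`: the determinant of the `(c+2)×(c+2)` matrix whose first
`c+1` rows are formed by the columns `a_0, …, a_c, a_{c+t}` of `A` (as constant
polynomials) and whose last row is `(T_0^{l_0}, …, T_c^{l_c}, T_{c+t}^{l_{c+t}})`. -/
def gPoly (r c m : ℕ) (hcr : c ≤ r) (nn : Fin (r + 1) → ℕ)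
    (l : ∀ i : Fin (r + 1), Fin (nn i) → ℕ)
    (A : Matrix (Fin (c + 1)) (Fin (r + 1)) 𝕂) (t : Fin (r - c)) :
    MvPolynomial (VarIdx r m nn) 𝕂 :=
  Matrix.det (Matrix.of fun q p : Fin (c + 2) =>
    if h : (q : ℕ) < c + 1 then C (A ⟨q, h⟩ (colOf r c hcr t p))
    else Tmon 𝕂 r m nn l (colOf r c hcr t p))

/-- The ring `R = 𝕂[T_{ij}, S_k] / ⟨g_1, …, g_{r-c}⟩`. -/
abbrev RingAP (r c m : ℕ) (hcr : c ≤ r) (nn : Fin (r + 1) → ℕ)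
    (l : ∀ i : Fin (r + 1), Fin (nn i) → ℕ)
    (A : Matrix (Fin (c + 1)) (Fin (r + 1)) 𝕂) : Type :=
  MvPolynomial (VarIdx r m nn) 𝕂 ⧸ Ideal.span (Set.range (gPoly 𝕂 r c m hcr nn l A))

end

noncomputable section
variable (𝕂 : Type) [Field 𝕂]

/-- The polynomial `g_v = v_0 T_0^{l_0} + ⋯ + v_r T_r^{l_r}`. -/
def gv (r m : ℕ) (nn : Fin (r + 1) → ℕ)
    (l : ∀ i : Fin (r + 1), Fin (nn i) → ℕ) (v : Fin (r + 1) → 𝕂) :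
    MvPolynomial (VarIdx r m nn) 𝕂 :=
  ∑ i : Fin (r + 1), C (v i) * Tmon 𝕂 r m nn l i

end


-- ===== auxiliary machinery =====
section Aux
open MvPolynomial Matrix

variable {𝕂 : Type} [Field 𝕂] {c r : ℕ}

/-- Generic Laplace expansion along the last row for our block-shaped matrices. -/
lemma det_expand_last {R : Type} [CommRing R] (f : 𝕂 →+* R)
    (a : Matrix (Fin (c + 1)) (Fin (c + 2)) 𝕂) (u : Fin (c + 2) → R) :
    (Matrix.of fun q p : Fin (c + 2) =>
        if h : (q : ℕ) < c + 1 then f (a ⟨q, h⟩ p) else u p).det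
      = ∑ p : Fin (c + 2), u p * ((-1 : R) ^ (c + 1 + (p : ℕ)) *
          f (Matrix.det (Matrix.of fun q p' => a q (p.succAbove p')))) := by
  rw [Matrix.det_succ_row _ (Fin.last (c + 1))]
  refine Finset.sum_congr rfl fun p _ => ?_
  have h1 : (Matrix.of fun q p : Fin (c + 2) =>
      if h : (q : ℕ) < c + 1 then f (a ⟨q, h⟩ p) else u p) (Fin.last (c+1)) p = u p := by
    simp [Matrix.of_apply]
  have h2 : ((Matrix.of fun q p : Fin (c + 2) =>
      if h : (q : ℕ) < c + 1 then f (a ⟨q, h⟩ p) else u p).submatrix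
        (Fin.last (c+1)).succAbove p.succAbove)
      = (Matrix.of fun q p' => a q (p.succAbove p')).map f := by
    ext q p'
    simp [Matrix.submatrix_apply, Fin.succAbove_last, Matrix.of_apply, Matrix.map_apply,
      Fin.is_lt]
    intro h; exact absurd q.isLt (by omega)
  rw [h1, h2, ← RingHom.mapMatrix_apply, ← RingHom.map_det]
  simp [Fin.val_last]
  ring

variable (hcr : c ≤ r) (A : Matrix (Fin (c + 1)) (Fin (r + 1)) 𝕂)

/-- The minor of the matrix defining `g_t` obtained by deleting the last row and column `p`. -/
noncomputable def Nmin (t : Fin (r - c)) (p : Fin (c + 2)) :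
    Matrix (Fin (c + 1)) (Fin (c + 1)) 𝕂 :=
  Matrix.of fun q p' => A q (colOf r c hcr t (p.succAbove p'))

/-- The cofactor of the matrix defining `g_t` along the last row. -/
noncomputable def cof (t : Fin (r - c)) (p : Fin (c + 2)) : 𝕂 :=
  (-1 : 𝕂) ^ (c + 1 + (p : ℕ)) * (Nmin hcr A t p).det

/-- The kernel vector `w_t` with `g_{w_t} = g_t`. -/
noncomputable def wv (t : Fin (r - c)) : Fin (r + 1) → 𝕂 := fun i =>
  ∑ p ∈ Finset.univ.filter (fun p => colOf r c hcr t p = i), cof hcr A t p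

/-- The square matrix formed by the first `c+1` columns of `A`. -/
noncomputable def M0 : Matrix (Fin (c + 1)) (Fin (c + 1)) 𝕂 :=
  Matrix.of fun q p' => A q (Fin.castLE (by omega) p')

lemma gPoly_eq_sum (m : ℕ) (nn : Fin (r + 1) → ℕ) (l : ∀ i : Fin (r + 1), Fin (nn i) → ℕ)
    (t : Fin (r - c)) :
    gPoly 𝕂 r c m hcr nn l A t
      = ∑ p : Fin (c + 2), Tmon 𝕂 r m nn l (colOf r c hcr t p) * C (cof hcr A t p) := by
  have h := det_expand_last (C : 𝕂 →+* MvPolynomial (VarIdx r m nn) 𝕂)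
    (Matrix.of fun q p => A q (colOf r c hcr t p)) (fun p => Tmon 𝕂 r m nn l (colOf r c hcr t p))
  simp only [Matrix.of_apply] at h
  rw [gPoly, h]
  refine Finset.sum_congr rfl fun p _ => ?_
  rw [cof, _root_.map_mul, map_pow, map_neg, _root_.map_one]
  rfl

lemma mulVec_wv (t : Fin (r - c)) : A.mulVec (wv hcr A t) = 0 := by
  funext q
  have expand := det_expand_last (RingHom.id 𝕂)
    (Matrix.of fun q' p => A q' (colOf r c hcr t p)) (fun p => A q (colOf r c hcr t p))
  have hdet : (Matrix.of fun q' p : Fin (c + 2) =>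
      if h : (q' : ℕ) < c + 1 then A ⟨q', h⟩ (colOf r c hcr t p)
      else A q (colOf r c hcr t p)).det = 0 := by
    apply Matrix.det_zero_of_row_eq (i := (⟨(q : ℕ), by omega⟩ : Fin (c + 2)))
      (j := Fin.last (c + 1))
    · intro h
      have := congrArg Fin.val h
      simp [Fin.val_last] at this
      omega
    · funext p
      simp [Matrix.of_apply, q.isLt, Fin.val_last]
  simp only [Matrix.of_apply, RingHom.id_apply] at expand hdet
  have key : ∑ p : Fin (c + 2), A q (colOf r c hcr t p) * cof hcr A t p = 0 := by
    rw [← hdet, expand]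
    exact Finset.sum_congr rfl fun p _ => by rw [cof]; rfl
  have h : A.mulVec (wv hcr A t) q
      = ∑ p : Fin (c + 2), A q (colOf r c hcr t p) * cof hcr A t p := by
    rw [Matrix.mulVec, dotProduct]
    rw [← Finset.sum_fiberwise_of_maps_to (g := colOf r c hcr t) (t := Finset.univ)
      (fun p _ => Finset.mem_univ _) (fun p => A q (colOf r c hcr t p) * cof hcr A t p)]
    refine Finset.sum_congr rfl fun i _ => ?_
    rw [wv, Finset.mul_sum]
    exact Finset.sum_congr rfl fun p hp => by
      rw [(Finset.mem_filter.1 hp).2]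
  rw [h, key]; rfl

lemma gv_wv (m : ℕ) (nn : Fin (r + 1) → ℕ) (l : ∀ i : Fin (r + 1), Fin (nn i) → ℕ)
    (t : Fin (r - c)) :
    gv 𝕂 r m nn l (wv hcr A t) = gPoly 𝕂 r c m hcr nn l A t := by
  rw [gPoly_eq_sum, gv]
  rw [← Finset.sum_fiberwise_of_maps_to (g := colOf r c hcr t) (t := Finset.univ)
    (fun p _ => Finset.mem_univ _)
    (fun p => Tmon 𝕂 r m nn l (colOf r c hcr t p) * C (cof hcr A t p))]
  refine Finset.sum_congr rfl fun i _ => ?_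
  rw [wv, map_sum, Finset.sum_mul]
  exact Finset.sum_congr rfl fun p hp => by
    rw [(Finset.mem_filter.1 hp).2, mul_comm]

lemma isUnit_M0
    (hA : ∀ s : Finset (Fin (r + 1)), s.card = c + 1 →
      LinearIndependent 𝕂 fun j : s => A.transpose (j : Fin (r + 1))) :
    IsUnit (M0 hcr A) := by
  set e : Fin (c + 1) → Fin (r + 1) := Fin.castLE (by omega) with he
  have einj : Function.Injective e := Fin.castLE_injective _
  set s : Finset (Fin (r + 1)) := Finset.image e Finset.univ with hs
  have hcard : s.card = c + 1 := by
    rw [hs, Finset.card_image_of_injective _ einj, Finset.card_univ, Fintype.card_fin]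
  have h1 := hA s hcard
  have finj : Function.Injective (fun p' : Fin (c + 1) =>
      (⟨e p', Finset.mem_image_of_mem e (Finset.mem_univ p')⟩ : s)) := by
    intro a b hab
    exact einj (congrArg Subtype.val hab)
  have h2 := h1.comp _ finj
  rw [← Matrix.linearIndependent_cols_iff_isUnit]
  have h3 : (fun i => (M0 hcr A)ᵀ i) = (fun j : s => A.transpose (j : Fin (r + 1))) ∘
      (fun p' : Fin (c + 1) => (⟨e p', Finset.mem_image_of_mem e (Finset.mem_univ p')⟩ : s)) := by
    funext p'
    ext q
    simp [M0, Matrix.transpose_apply, Function.comp]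
    rfl
  show LinearIndependent 𝕂 (fun i => (M0 hcr A)ᵀ i)
  rw [h3]
  exact h2

lemma Nmin_last (t : Fin (r - c)) : Nmin hcr A t (Fin.last (c + 1)) = M0 hcr A := by
  ext q p'
  have h : (Fin.last (c + 1)).succAbove p' = p'.castSucc := by
    rw [Fin.succAbove_last]
  rw [Nmin, M0, Matrix.of_apply, Matrix.of_apply, h]
  congr 1
  rw [colOf, dif_pos (show ((p'.castSucc : Fin (c+2)) : ℕ) ≤ c by simp; omega)]
  ext; simp

lemma wv_high (t : Fin (r - c)) :
    wv hcr A t ⟨c + 1 + t, by have := t.isLt; omega⟩ = (M0 hcr A).det := by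
  rw [wv]
  have hfil : Finset.univ.filter
      (fun p => colOf r c hcr t p = (⟨c + 1 + t, by have := t.isLt; omega⟩ : Fin (r + 1)))
      = {Fin.last (c + 1)} := by
    ext p
    simp only [Finset.mem_filter, Finset.mem_univ, true_and, Finset.mem_singleton]
    constructor
    · intro h
      by_cases hp : (p : ℕ) ≤ c
      · rw [colOf, dif_pos hp] at h
        have := congrArg Fin.val h
        simp at this; omega
      · ext; simp [Fin.val_last]; omega
    · rintro rfl
      rw [colOf, dif_neg (by simp [Fin.val_last])]
  rw [hfil, Finset.sum_singleton, cof, Nmin_last]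
  have h1 : (-1 : 𝕂) ^ (c + 1 + ((Fin.last (c + 1) : Fin (c + 2)) : ℕ)) = 1 := by
    rw [Fin.val_last, show c + 1 + (c + 1) = 2 * (c + 1) by ring, pow_mul]
    simp
  rw [h1, one_mul]

lemma wv_high_ne (t : Fin (r - c)) (i : Fin (r + 1)) (h1 : c + 1 ≤ (i : ℕ))
    (h2 : (i : ℕ) ≠ c + 1 + t) : wv hcr A t i = 0 := by
  rw [wv]
  convert Finset.sum_empty
  ext p
  simp only [Finset.mem_filter, Finset.mem_univ, true_and, Finset.notMem_empty, iff_false]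
  intro h
  by_cases hp : (p : ℕ) ≤ c
  · rw [colOf, dif_pos hp] at h
    have := congrArg Fin.val h; simp at this; omega
  · rw [colOf, dif_neg hp] at h
    have := congrArg Fin.val h; simp at this; omega

lemma low_vanish (u : Fin (r + 1) → 𝕂) (hu_high : ∀ i : Fin (r + 1), c + 1 ≤ (i : ℕ) → u i = 0)
    (hu_ker : A.mulVec u = 0) (hunit : IsUnit (M0 hcr A)) : u = 0 := by
  have hM : (M0 hcr A).mulVec (fun p' => u (Fin.castLE (by omega) p')) = 0 := by
    funext q
    have step : (A.mulVec u) q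
        = (M0 hcr A).mulVec (fun p' => u (Fin.castLE (by omega) p')) q := by
      rw [Matrix.mulVec, Matrix.mulVec, dotProduct, dotProduct]
      rw [← Finset.sum_subset (Finset.subset_univ
        (Finset.image (Fin.castLE (by omega : c + 1 ≤ r + 1)) Finset.univ)) ?_]
      · rw [Finset.sum_image (fun a _ b _ h => Fin.castLE_injective _ h)]
        rfl
      · intro i _ hi
        simp only [Finset.mem_image, Finset.mem_univ, true_and, not_exists] at hi
        have : c + 1 ≤ (i : ℕ) := by
          by_contra hcon
          exact hi ⟨(i : ℕ), by omega⟩ (by ext; simp)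
        rw [hu_high i this, mul_zero]
    rw [← step, hu_ker]
  have hinj := Matrix.mulVec_injective_iff_isUnit.2 hunit
  have hz : (fun p' => u (Fin.castLE (by omega : c + 1 ≤ r + 1) p')) = 0 := by
    apply hinj
    rw [hM, Matrix.mulVec_zero]
  funext i
  by_cases hi : c + 1 ≤ (i : ℕ)
  · exact hu_high i hi
  · have := congrFun hz ⟨(i : ℕ), by omega⟩
    simpa using this

lemma ker_eq
    (hA : ∀ s : Finset (Fin (r + 1)), s.card = c + 1 →
      LinearIndependent 𝕂 fun j : s => A.transpose (j : Fin (r + 1))) :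
    LinearMap.ker A.mulVecLin = Submodule.span 𝕂 (Set.range (wv hcr A)) := by
  have hunit := isUnit_M0 hcr A hA
  have hd : (M0 hcr A).det ≠ 0 := ((Matrix.isUnit_iff_isUnit_det _).1 hunit).ne_zero
  apply le_antisymm
  · intro v hv
    rw [LinearMap.mem_ker, Matrix.mulVecLin_apply] at hv
    let coeff : Fin (r - c) → 𝕂 := fun t => v ⟨c + 1 + t, by have := t.isLt; omega⟩ / (M0 hcr A).det
    let u : Fin (r + 1) → 𝕂 := v - ∑ t : Fin (r - c), coeff t • wv hcr A t
    have hu_high : ∀ i : Fin (r + 1), c + 1 ≤ (i : ℕ) → u i = 0 := by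
      intro i hi
      have ht0lt : (i : ℕ) - (c + 1) < r - c := by have := i.isLt; omega
      set t₀ : Fin (r - c) := ⟨(i : ℕ) - (c + 1), ht0lt⟩ with ht₀
      have hieq : (⟨c + 1 + t₀, by have := t₀.isLt; omega⟩ : Fin (r + 1)) = i := by
        ext; simp only [ht₀]; omega
      have hsum : (∑ t : Fin (r - c), coeff t • wv hcr A t) i = coeff t₀ * wv hcr A t₀ i := by
        rw [Finset.sum_apply]
        rw [Finset.sum_eq_single t₀]
        · rfl
        · intro t _ ht
          rw [Pi.smul_apply, smul_eq_mul, wv_high_ne hcr A t i hi, mul_zero]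
          intro hcon
          apply ht; ext; simp only [ht₀]; omega
        · intro h; exact absurd (Finset.mem_univ t₀) h
      show v i - (∑ t : Fin (r - c), coeff t • wv hcr A t) i = 0
      rw [hsum]
      have hwi : wv hcr A t₀ i = (M0 hcr A).det := by
        rw [← hieq]; exact wv_high hcr A t₀
      rw [hwi]
      show v i - v ⟨c + 1 + t₀, by have := t₀.isLt; omega⟩ / (M0 hcr A).det * (M0 hcr A).det = 0
      rw [hieq, div_mul_cancel₀ _ hd, sub_self]
    have hu_ker : A.mulVec u = 0 := by
      have hstep : A.mulVecLin u = A.mulVecLin v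
          - ∑ t : Fin (r - c), coeff t • A.mulVecLin (wv hcr A t) := by
        rw [map_sub, map_sum]
        simp only [_root_.map_smul]
      rw [show A.mulVec u = A.mulVecLin u from rfl, hstep]
      simp only [Matrix.mulVecLin_apply, mulVec_wv, hv, smul_zero,
        Finset.sum_const_zero, sub_zero]
    have hu0 : u = 0 := low_vanish hcr A u hu_high hu_ker hunit
    have hv_eq : v = ∑ t : Fin (r - c), coeff t • wv hcr A t := sub_eq_zero.1 hu0
    rw [hv_eq]
    exact Submodule.sum_mem _ fun t _ =>
      Submodule.smul_mem _ _ (Submodule.subset_span ⟨t, rfl⟩)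
  · rw [Submodule.span_le]
    rintro _ ⟨t, rfl⟩
    simp only [SetLike.mem_coe, LinearMap.mem_ker, Matrix.mulVecLin_apply]
    exact mulVec_wv hcr A t

/-- `v ↦ g_v` as a `𝕂`-linear map. -/
noncomputable def gvL (m : ℕ) (nn : Fin (r + 1) → ℕ) (l : ∀ i : Fin (r + 1), Fin (nn i) → ℕ) :
    (Fin (r + 1) → 𝕂) →ₗ[𝕂] MvPolynomial (VarIdx r m nn) 𝕂 where
  toFun v := gv 𝕂 r m nn l v
  map_add' x y := by
    simp [gv, map_add, add_mul, Finset.sum_add_distrib]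
  map_smul' a x := by
    simp [gv, MvPolynomial.smul_eq_C_mul, Finset.mul_sum, mul_assoc, _root_.map_mul]

lemma gv_mem_ideal_span (m : ℕ) (nn : Fin (r + 1) → ℕ)
    (l : ∀ i : Fin (r + 1), Fin (nn i) → ℕ) (S : Set (Fin (r + 1) → 𝕂))
    (v : Fin (r + 1) → 𝕂) (hv : v ∈ Submodule.span 𝕂 S) :
    gv 𝕂 r m nn l v ∈ Ideal.span (gv 𝕂 r m nn l '' S) := by
  have h1 : gvL (𝕂 := 𝕂) m nn l v ∈ Submodule.span 𝕂 (gvL (𝕂 := 𝕂) m nn l '' S) :=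
    Submodule.apply_mem_span_image_of_mem_span _ hv
  have h2 : Submodule.span 𝕂 ((gvL (𝕂 := 𝕂) m nn l) '' S)
      ≤ (Ideal.span (gv 𝕂 r m nn l '' S)).restrictScalars 𝕂 := by
    rw [Submodule.span_le]
    rintro x ⟨w, hw, rfl⟩
    exact Ideal.subset_span ⟨w, hw, rfl⟩
  exact h2 h1

end Aux

/-- For every `v ∈ 𝕂^{r+1}` with `A·v = 0`, the polynomial `g_v`
lies in the ideal `⟨g_1,…,g_{r−c}⟩`; moreover, if `B` spans the kernel of `A` as a
`𝕂`-vector space, then the polynomials `g_v`, `v ∈ B`, generate this ideal. -/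
theorem statement_11
    (𝕂 : Type) [Field 𝕂] [IsAlgClosed 𝕂] [CharZero 𝕂]
    (r c m : ℕ) (hc : 0 < c) (hcr : c ≤ r)
    (nn : Fin (r + 1) → ℕ) (hnn : ∀ i, 0 < nn i)
    (l : ∀ i : Fin (r + 1), Fin (nn i) → ℕ) (hl : ∀ i j, 0 < l i j)
    (A : Matrix (Fin (c + 1)) (Fin (r + 1)) 𝕂)
    (hA : ∀ s : Finset (Fin (r + 1)), s.card = c + 1 →
      LinearIndependent 𝕂 fun j : s => A.transpose (j : Fin (r + 1)))
    :
    (∀ v : Fin (r + 1) → 𝕂, A.mulVec v = 0 →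
      gv 𝕂 r m nn l v ∈ Ideal.span (Set.range (gPoly 𝕂 r c m hcr nn l A))) ∧
    (∀ B : Set (Fin (r + 1) → 𝕂),
      Submodule.span 𝕂 B = LinearMap.ker A.mulVecLin →
      Ideal.span (gv 𝕂 r m nn l '' B) =
        Ideal.span (Set.range (gPoly 𝕂 r c m hcr nn l A))) := by
  have himg : gv 𝕂 r m nn l '' Set.range (wv hcr A)
      = Set.range (gPoly 𝕂 r c m hcr nn l A) := by
    have hfun : (gv 𝕂 r m nn l ∘ wv hcr A) = gPoly 𝕂 r c m hcr nn l A :=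
      funext fun t => gv_wv hcr A m nn l t
    rw [← Set.range_comp, hfun]
  have part1 : ∀ v : Fin (r + 1) → 𝕂, A.mulVec v = 0 →
      gv 𝕂 r m nn l v ∈ Ideal.span (Set.range (gPoly 𝕂 r c m hcr nn l A)) := by
    intro v hv
    have hv' : v ∈ LinearMap.ker A.mulVecLin := by
      rw [LinearMap.mem_ker, Matrix.mulVecLin_apply]; exact hv
    rw [ker_eq hcr A hA] at hv'
    have h := gv_mem_ideal_span m nn l (Set.range (wv hcr A)) v hv'
    rwa [himg] at h
  refine ⟨part1, fun B hB => ?_⟩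
  apply le_antisymm
  · rw [Ideal.span_le]
    rintro x ⟨v, hvB, rfl⟩
    have hv : v ∈ LinearMap.ker A.mulVecLin := hB ▸ Submodule.subset_span hvB
    rw [LinearMap.mem_ker, Matrix.mulVecLin_apply] at hv
    exact part1 v hv
  · rw [Ideal.span_le]
    intro x hx
    obtain ⟨t, rfl⟩ := hx
    have hw : wv hcr A t ∈ Submodule.span 𝕂 B := by
      rw [hB, LinearMap.mem_ker, Matrix.mulVecLin_apply]
      exact mulVec_wv hcr A t
    have h := gv_mem_ideal_span m nn l B (wv hcr A t) hw
    rw [gv_wv hcr A m nn l t] at h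
    exact h
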